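/- Let f : U → Y be differentiable with ‖f(x₀)‖ ≤ η, λ(Df(x₀)) ≥ ν > 0, and ‖Df(x) − Df(y)‖ ≤ K‖x − y‖ on B̄(x₀,R) ⊆ U. If 0 < d ≤ ν/K and g_d(t) = (η + νd) − (ν + Kd)t + (3K/2)t² has smallest real root t* ≤ R, then f has a unique zero x* ∈ B̄(x₀, t*), and any inexact Newton sequence x_{k+1} = x_k − Df(x_k)⁻¹f(x_k) + r_k with ‖r_k‖ ≤ d stays in B̄(x₀, t*) and satisfies ‖x* − x_{k+1}‖ ≤ (√3/2)Kν⁻¹‖x* − x_k‖² + ‖r_k‖. -/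

import Mathlib

open Set

lemma aux_taylor {X Y : Type*} [NormedAddCommGroup X] [NormedSpace ℝ X]
    [NormedAddCommGroup Y] [NormedSpace ℝ Y]
    {f : X → Y} {f' : X → (X →L[ℝ] Y)} {s : Set X} (hs : Convex ℝ s)
    (hder : ∀ z ∈ s, HasFDerivAt f (f' z) z) {K : ℝ}
    (hlip : ∀ z ∈ s, ∀ w ∈ s, ‖f' z - f' w‖ ≤ K * ‖z - w‖)
    {x y : X} (hx : x ∈ s) (hy : y ∈ s) :
    ‖f y - f x - f' x (y - x)‖ ≤ K / 2 * ‖y - x‖ ^ 2 := by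
  set v := y - x with hv
  have hmem : ∀ τ : ℝ, τ ∈ Icc (0:ℝ) 1 → x + τ • v ∈ s := by
    intro τ hτ
    have h := hs hx hy (by linarith [hτ.1, hτ.2] : (0:ℝ) ≤ 1 - τ) hτ.1 (by ring)
    have : (1 - τ) • x + τ • y = x + τ • v := by
      rw [hv]; rw [smul_sub]; rw [sub_smul, one_smul]; abel
    rwa [this] at h
  set φ : ℝ → Y := fun τ => f (x + τ • v) - f x - τ • (f' x v) with hφ
  set φ' : ℝ → Y := fun τ => (f' (x + τ • v) - f' x) v with hφ'
  have hd : ∀ τ ∈ Icc (0:ℝ) 1, HasDerivAt φ (φ' τ) τ := by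
    intro τ hτ
    have hline : HasDerivAt (fun τ : ℝ => x + τ • v) v τ := by
      simpa using ((hasDerivAt_id τ).smul_const v).const_add x
    have h1 : HasDerivAt (fun τ : ℝ => f (x + τ • v)) (f' (x + τ • v) v) τ :=
      (hder _ (hmem τ hτ)).comp_hasDerivAt τ hline
    have h2 : HasDerivAt (fun τ : ℝ => f x + τ • (f' x v)) (f' x v) τ := by
      simpa using ((hasDerivAt_id τ).smul_const (f' x v)).const_add (f x)
    have h3 := h1.sub h2
    have heq : φ = fun τ : ℝ => f (x + τ • v) - (f x + τ • (f' x v)) := by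
      funext σ; simp only [hφ, sub_sub]
    rw [heq, hφ']
    exact h3
  have hbound : ∀ τ ∈ Ico (0:ℝ) 1, ‖φ' τ‖ ≤ K * ‖v‖ ^ 2 * τ := by
    intro τ hτ
    have h1 : ‖(f' (x + τ • v) - f' x)‖ ≤ K * (τ * ‖v‖) := by
      have := hlip _ (hmem τ ⟨hτ.1, le_of_lt hτ.2⟩) _ hx
      simpa [norm_smul, abs_of_nonneg hτ.1] using this
    calc ‖φ' τ‖ ≤ ‖f' (x + τ • v) - f' x‖ * ‖v‖ :=
          (f' (x + τ • v) - f' x).le_opNorm v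
    _ ≤ K * (τ * ‖v‖) * ‖v‖ := by
          apply mul_le_mul_of_nonneg_right h1 (norm_nonneg _)
    _ = K * ‖v‖ ^ 2 * τ := by ring
  have hB : ∀ τ : ℝ, HasDerivAt (fun τ : ℝ => K * ‖v‖ ^ 2 / 2 * τ ^ 2) (K * ‖v‖ ^ 2 * τ) τ := by
    intro τ
    have := (hasDerivAt_pow 2 τ).const_mul (K * ‖v‖ ^ 2 / 2)
    refine this.congr_deriv ?_
    rw [show (2:ℕ) - 1 = 1 from rfl]; push_cast; ring
  have key := image_norm_le_of_norm_deriv_right_le_deriv_boundary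
    (f := φ) (f' := φ') (a := 0) (b := 1)
    (fun τ hτ => (hd τ hτ).continuousAt.continuousWithinAt)
    (fun τ hτ => (hd τ ⟨hτ.1, le_of_lt hτ.2⟩).hasDerivWithinAt)
    (B := fun τ => K * ‖v‖ ^ 2 / 2 * τ ^ 2) (B' := fun τ => K * ‖v‖ ^ 2 * τ)
    (by simp [hφ]) hB hbound (right_mem_Icc.mpr zero_le_one)
  have hφ1 : φ 1 = f y - f x - f' x v := by simp [hφ, hv]
  rw [hφ1] at key
  calc ‖f y - f x - f' x (y - x)‖ ≤ K * ‖v‖ ^ 2 / 2 * 1 ^ 2 := key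
  _ = K / 2 * ‖y - x‖ ^ 2 := by rw [hv]; ring

lemma aux_inv {X Y : Type*} [NormedAddCommGroup X] [NormedSpace ℝ X] [CompleteSpace X]
    [NormedAddCommGroup Y] [NormedSpace ℝ Y]
    (e₀ : X ≃L[ℝ] Y) (B : X →L[ℝ] Y) {c : ℝ} (hc : c < 1)
    (hB : ‖(e₀.symm : Y →L[ℝ] X).comp ((e₀ : X →L[ℝ] Y) - B)‖ ≤ c) :
    ∃ e : X ≃L[ℝ] Y, (e : X →L[ℝ] Y) = B ∧
      ‖(e.symm : Y →L[ℝ] X)‖ ≤ ‖(e₀.symm : Y →L[ℝ] X)‖ / (1 - c) := by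
  set T : X →L[ℝ] X := (e₀.symm : Y →L[ℝ] X).comp ((e₀ : X →L[ℝ] Y) - B) with hT
  have hT1 : ‖T‖ < 1 := lt_of_le_of_lt hB hc
  have hc0 : 0 ≤ c := le_trans (norm_nonneg T) hB
  let u : (X →L[ℝ] X)ˣ := Units.oneSub T hT1
  have huinv : ((u⁻¹ : (X →L[ℝ] X)ˣ) : X →L[ℝ] X) = ∑' n : ℕ, T ^ n := rfl
  have honeminus : ∀ z : X, (1 - T) z = e₀.symm (B z) := by
    intro z
    simp only [hT, ContinuousLinearMap.sub_apply, ContinuousLinearMap.one_apply,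
      ContinuousLinearMap.coe_comp', Function.comp_apply]
    simp [map_sub]
  refine ⟨(ContinuousLinearEquiv.ofUnit u).trans e₀, ?_, ?_⟩
  · ext z
    have : (ContinuousLinearEquiv.ofUnit u) z = (1 - T) z := rfl
    simp only [ContinuousLinearEquiv.coe_coe, ContinuousLinearEquiv.trans_apply, this,
      honeminus z]
    exact e₀.apply_symm_apply (B z)
  · have hsymm : ∀ y : Y, (((ContinuousLinearEquiv.ofUnit u).trans e₀).symm) y
        = ((u⁻¹ : (X →L[ℝ] X)ˣ) : X →L[ℝ] X) (e₀.symm y) := fun y => rfl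
    have hinvnorm : ‖((u⁻¹ : (X →L[ℝ] X)ˣ) : X →L[ℝ] X)‖ ≤ (1 - c)⁻¹ := by
      rw [huinv]
      have h1 := tsum_geometric_le_of_norm_lt_one T hT1
      have h2 : ‖(1 : X →L[ℝ] X)‖ ≤ 1 := ContinuousLinearMap.norm_id_le
      have h3 : (1 - ‖T‖)⁻¹ ≤ (1 - c)⁻¹ := by
        apply inv_anti₀ (by linarith)
        linarith [le_trans hB (le_refl c), hB]
      linarith
    apply ContinuousLinearMap.opNorm_le_bound _ (by
      apply div_nonneg (norm_nonneg _) (by linarith))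
    intro y
    rw [ContinuousLinearEquiv.coe_coe, hsymm y]
    calc ‖((u⁻¹ : (X →L[ℝ] X)ˣ) : X →L[ℝ] X) (e₀.symm y)‖
        ≤ ‖((u⁻¹ : (X →L[ℝ] X)ˣ) : X →L[ℝ] X)‖ * ‖(e₀.symm : Y →L[ℝ] X) y‖ :=
          ContinuousLinearMap.le_opNorm _ _
      _ ≤ (1 - c)⁻¹ * (‖(e₀.symm : Y →L[ℝ] X)‖ * ‖y‖) := by
          apply mul_le_mul hinvnorm (ContinuousLinearMap.le_opNorm _ _) (norm_nonneg _)
            (inv_nonneg.mpr (by linarith))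
      _ = ‖(e₀.symm : Y →L[ℝ] X)‖ / (1 - c) * ‖y‖ := by ring

lemma aux_symm_eq {X Y : Type*} [NormedAddCommGroup X] [NormedSpace ℝ X]
    [NormedAddCommGroup Y] [NormedSpace ℝ Y] (e e' : X ≃L[ℝ] Y)
    (h : (e : X →L[ℝ] Y) = (e' : X →L[ℝ] Y)) (y : Y) : e.symm y = e'.symm y := by
  apply e.injective
  have h2 : e (e'.symm y) = e' (e'.symm y) := by
    have := congrArg (fun T : X →L[ℝ] Y => T (e'.symm y)) h
    simpa using this
  rw [e.apply_symm_apply, h2, e'.apply_symm_apply]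


open scoped Classical in
/-- The bijectivity modulus of a bounded linear operator: `‖F⁻¹‖⁻¹` if `F` is
invertible with bounded inverse, and `0` otherwise. -/
noncomputable def bijMod {X Y : Type*} [NormedAddCommGroup X] [NormedSpace ℝ X]
    [NormedAddCommGroup Y] [NormedSpace ℝ Y] (F : X →L[ℝ] Y) : ℝ :=
  if h : ∃ e : X ≃L[ℝ] Y, (e : X →L[ℝ] Y) = F then
    ‖(h.choose.symm : Y →L[ℝ] X)‖⁻¹
  else 0

set_option maxHeartbeats 1000000 in
theorem stmt_17
    {X Y : Type*} [NormedAddCommGroup X] [NormedSpace ℝ X] [CompleteSpace X]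
    [NormedAddCommGroup Y] [NormedSpace ℝ Y] [CompleteSpace Y]
    (U : Set X) (hU : IsOpen U) (f : X → Y) (f' : X → (X →L[ℝ] Y))
    (hf : ∀ x ∈ U, HasFDerivAt f (f' x) x)
    (x₀ : X) (hx₀ : x₀ ∈ U) (R : ℝ) (hR : 0 < R)
    (hball : Metric.closedBall x₀ R ⊆ U)
    (η K ν d : ℝ) (hη : 0 ≤ η) (hK : 0 < K) (hν : 0 < ν)
    (hd : 0 < d) (hdν : d ≤ ν / K)
    (hfx₀ : ‖f x₀‖ ≤ η) (hmod : ν ≤ bijMod (f' x₀))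
    (hLip : ∀ x ∈ Metric.closedBall x₀ R, ∀ y ∈ Metric.closedBall x₀ R,
      ‖f' x - f' y‖ ≤ K * ‖x - y‖)
    (t : ℝ)
    (hroot : (η + ν * d) - (ν + K * d) * t + 3 * K / 2 * t ^ 2 = 0)
    (hsmallest : ∀ s : ℝ, (η + ν * d) - (ν + K * d) * s + 3 * K / 2 * s ^ 2 = 0 → t ≤ s)
    (htR : t ≤ R) :
    (∃! x : X, x ∈ Metric.closedBall x₀ t ∧ f x = 0) ∧
    (∀ (x rs : ℕ → X), x 0 = x₀ → (∀ k, ‖rs k‖ ≤ d) →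
      (∀ k, ∀ ek : X ≃L[ℝ] Y, (ek : X →L[ℝ] Y) = f' (x k) →
        x (k + 1) = x k - ek.symm (f (x k)) + rs k) →
      (∀ k, x k ∈ Metric.closedBall x₀ t) ∧
      ∀ xstar : X, xstar ∈ Metric.closedBall x₀ t → f xstar = 0 →
        ∀ k, ‖xstar - x (k + 1)‖ ≤
          Real.sqrt 3 / 2 * K * ν⁻¹ * ‖xstar - x k‖ ^ 2 + ‖rs k‖) := by
  -- scalar facts
  have hKd : K * d ≤ ν := by
    have := (le_div_iff₀ hK).mp hdν
    nlinarith
  have ht0 : 0 < t := by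
    by_contra h
    push_neg at h
    nlinarith [mul_pos hν hd, sq_nonneg t,
      mul_nonneg (by positivity : (0:ℝ) ≤ ν + K * d) (neg_nonneg.mpr h)]
  have h3Kt : 3 * (K * t) ≤ ν + K * d := by
    have hs2 : (η + ν * d) - (ν + K * d) * (2 * (ν + K * d) / (3 * K) - t)
        + 3 * K / 2 * (2 * (ν + K * d) / (3 * K) - t) ^ 2 = 0 := by
      field_simp
      linear_combination (6 * K) * hroot
    have h9 := hsmallest _ hs2
    have h10 : 2 * t ≤ 2 * (ν + K * d) / (3 * K) := by linarith
    rw [le_div_iff₀ (by positivity)] at h10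
    nlinarith
  have hsq3 : Real.sqrt 3 ^ 2 = 3 := Real.sq_sqrt (by norm_num)
  have hsq3pos : 0 < Real.sqrt 3 := Real.sqrt_pos.mpr (by norm_num)
  have hsq3lt : Real.sqrt 3 < 2 := by nlinarith
  have hsq3gt : 1 < Real.sqrt 3 := by nlinarith
  have h6K : 6 * K * ((η + ν * d) - (ν + K * d) * t + 3 * K / 2 * t ^ 2) = 0 := by
    rw [hroot]; ring
  have hdisc : 6 * (K * d) * ν ≤ (ν + K * d) ^ 2 := by
    nlinarith [sq_nonneg (ν + K * d - 3 * K * t), h6K, mul_nonneg hK.le hη]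
  have hq : (K * d) ^ 2 - 4 * ν * (K * d) + ν ^ 2 ≥ 0 := by nlinarith [hdisc]
  have h33 : ν ^ 2 * Real.sqrt 3 ^ 2 = 3 * ν ^ 2 := by rw [hsq3]; ring
  have hKd2 : K * d ≤ (2 - Real.sqrt 3) * ν := by
    by_contra h
    push_neg at h
    have h36 := mul_pos hsq3pos hν
    have h2 : K * d < (2 + Real.sqrt 3) * ν := by linarith [hKd]
    nlinarith [mul_pos (sub_pos.mpr h) (sub_pos.mpr h2), hq, h33]
  have hKt : K * t ≤ (1 - Real.sqrt 3 / 3) * ν := by linarith [h3Kt, hKd2]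
  have hνKt : Real.sqrt 3 / 3 * ν ≤ ν - K * t := by linarith [hKt]
  have hνKtpos : 0 < ν - K * t := by have h35 := mul_pos hsq3pos hν; linarith [hνKt]
  have hexp : η + K / 2 * t ^ 2 = (t - d) * (ν - K * t) := by linear_combination hroot
  set μ : ℝ := (ν - K * t)⁻¹ with hμ
  have hμpos : 0 < μ := inv_pos.mpr hνKtpos
  have hμν : μ * (ν - K * t) = 1 := inv_mul_cancel₀ (ne_of_gt hνKtpos)
  have hμ3 : μ ≤ Real.sqrt 3 * ν⁻¹ := by
    have h1 : 0 < Real.sqrt 3 / 3 * ν := by positivity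
    have h2 : (ν - K * t)⁻¹ ≤ (Real.sqrt 3 / 3 * ν)⁻¹ := inv_anti₀ h1 hνKt
    have h3 : (Real.sqrt 3 / 3 * ν)⁻¹ = Real.sqrt 3 * ν⁻¹ := by
      rw [mul_inv]
      have h4 : (Real.sqrt 3 / 3)⁻¹ = Real.sqrt 3 := by
        rw [inv_div, div_eq_iff (ne_of_gt hsq3pos)]
        nlinarith
      rw [h4]
    rw [hμ, ← h3]
    exact h2
  -- ball facts
  have hsubR : Metric.closedBall x₀ t ⊆ Metric.closedBall x₀ R :=
    Metric.closedBall_subset_closedBall htR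
  have hsubU : Metric.closedBall x₀ t ⊆ U := fun z hz => hball (hsubR hz)
  have hder : ∀ z ∈ Metric.closedBall x₀ t, HasFDerivAt f (f' z) z :=
    fun z hz => hf z (hsubU hz)
  have hlip' : ∀ z ∈ Metric.closedBall x₀ t, ∀ w ∈ Metric.closedBall x₀ t,
      ‖f' z - f' w‖ ≤ K * ‖z - w‖ := fun z hz w hw => hLip z (hsubR hz) w (hsubR hw)
  have hx₀mem : x₀ ∈ Metric.closedBall x₀ t := Metric.mem_closedBall_self ht0.le
  have hnorm_mem : ∀ z ∈ Metric.closedBall x₀ t, ‖z - x₀‖ ≤ t := by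
    intro z hz
    rw [← dist_eq_norm]
    exact Metric.mem_closedBall.mp hz
  -- extract e₀
  have hex : ∃ e : X ≃L[ℝ] Y, (e : X →L[ℝ] Y) = f' x₀ := by
    by_contra hne
    unfold bijMod at hmod
    rw [dif_neg hne] at hmod
    linarith
  have he₀ : ((hex.choose : X ≃L[ℝ] Y) : X →L[ℝ] Y) = f' x₀ := hex.choose_spec
  set e₀ : X ≃L[ℝ] Y := hex.choose with he₀def
  have hmod' : ν ≤ ‖(e₀.symm : Y →L[ℝ] X)‖⁻¹ := by
    unfold bijMod at hmod
    rw [dif_pos hex] at hmod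
    exact hmod
  have he₀n : ‖(e₀.symm : Y →L[ℝ] X)‖ ≤ ν⁻¹ := by
    rcases eq_or_lt_of_le (norm_nonneg (e₀.symm : Y →L[ℝ] X)) with h | h
    · rw [← h]; positivity
    · have h1 : ν * ‖(e₀.symm : Y →L[ℝ] X)‖ ≤ 1 := by
        calc ν * ‖(e₀.symm : Y →L[ℝ] X)‖
            ≤ ‖(e₀.symm : Y →L[ℝ] X)‖⁻¹ * ‖(e₀.symm : Y →L[ℝ] X)‖ :=
              mul_le_mul_of_nonneg_right hmod' (norm_nonneg _)
          _ = 1 := inv_mul_cancel₀ (ne_of_gt h)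
      have h2 := mul_inv_cancel₀ (ne_of_gt hν)
      nlinarith [inv_pos.mpr hν]
  have hc1 : ν⁻¹ * (K * t) < 1 := by
    have h1 : ν⁻¹ * (K * t) ≤ ν⁻¹ * ((1 - Real.sqrt 3 / 3) * ν) :=
      mul_le_mul_of_nonneg_left hKt (inv_nonneg.mpr hν.le)
    have h2 : ν⁻¹ * ((1 - Real.sqrt 3 / 3) * ν) = 1 - Real.sqrt 3 / 3 := by
      field_simp
    nlinarith [hsq3pos]
  have hAB : ∀ p ∈ Metric.closedBall x₀ t,
      ‖(e₀.symm : Y →L[ℝ] X).comp ((e₀ : X →L[ℝ] Y) - f' p)‖ ≤ ν⁻¹ * (K * t) := by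
    intro p hp
    calc ‖(e₀.symm : Y →L[ℝ] X).comp ((e₀ : X →L[ℝ] Y) - f' p)‖
        ≤ ‖(e₀.symm : Y →L[ℝ] X)‖ * ‖(e₀ : X →L[ℝ] Y) - f' p‖ :=
          ContinuousLinearMap.opNorm_comp_le _ _
      _ ≤ ν⁻¹ * (K * t) := by
          apply mul_le_mul he₀n ?_ (norm_nonneg _) (inv_nonneg.mpr hν.le)
          rw [he₀]
          calc ‖f' x₀ - f' p‖ ≤ K * ‖x₀ - p‖ := hLip x₀ (hsubR hx₀mem) p (hsubR hp)
            _ ≤ K * t := by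
                apply mul_le_mul_of_nonneg_left ?_ hK.le
                rw [norm_sub_rev]
                exact hnorm_mem p hp
  have key_inv : ∀ p ∈ Metric.closedBall x₀ t, ∃ e : X ≃L[ℝ] Y,
      (e : X →L[ℝ] Y) = f' p ∧ ∀ z : Y, ‖e.symm z‖ ≤ μ * ‖z‖ := by
    intro p hp
    obtain ⟨e, hecoe, heb⟩ := aux_inv e₀ (f' p) hc1 (hAB p hp)
    have h1c : 0 < 1 - ν⁻¹ * (K * t) := by linarith
    have hμc : μ * (1 - ν⁻¹ * (K * t)) = ν⁻¹ := by
      rw [hμ]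
      field_simp
    have heb2 : ‖(e.symm : Y →L[ℝ] X)‖ ≤ μ := by
      have h5 : ‖(e.symm : Y →L[ℝ] X)‖ * (1 - ν⁻¹ * (K * t)) ≤ ‖(e₀.symm : Y →L[ℝ] X)‖ :=
        (le_div_iff₀ h1c).mp heb
      have h6 : ‖(e.symm : Y →L[ℝ] X)‖ * (1 - ν⁻¹ * (K * t)) ≤ μ * (1 - ν⁻¹ * (K * t)) := by
        rw [hμc]; exact le_trans h5 he₀n
      exact le_of_mul_le_mul_right h6 h1c
    refine ⟨e, hecoe, fun z => ?_⟩
    calc ‖e.symm z‖ ≤ ‖(e.symm : Y →L[ℝ] X)‖ * ‖z‖ := (e.symm : Y →L[ℝ] X).le_opNorm z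
      _ ≤ μ * ‖z‖ := mul_le_mul_of_nonneg_right heb2 (norm_nonneg _)
  -- key step estimate
  have hstep : ∀ p ∈ Metric.closedBall x₀ t, ∀ e : X ≃L[ℝ] Y,
      (e : X →L[ℝ] Y) = f' p → ∀ q ∈ Metric.closedBall x₀ t,
      ‖q - (p - e.symm (f p))‖ ≤ μ * ‖f q‖ + μ * (K / 2 * ‖q - p‖ ^ 2) := by
    intro p hp e he q hq
    obtain ⟨e', he', hb'⟩ := key_inv p hp
    have hsymm : ∀ z, e.symm z = e'.symm z :=
      fun z => aux_symm_eq e e' (by rw [he, he']) z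
    have htay : ‖f q - f p - f' p (q - p)‖ ≤ K / 2 * ‖q - p‖ ^ 2 :=
      aux_taylor (convex_closedBall x₀ t) hder hlip' hp hq
    have hid : q - (p - e.symm (f p))
        = e'.symm (f q) - e'.symm (f q - f p - f' p (q - p)) := by
      rw [hsymm]
      have h1 : e'.symm (f q - f p - f' p (q - p))
          = e'.symm (f q) - e'.symm (f p) - (q - p) := by
        rw [map_sub, map_sub]
        congr 1
        rw [← he']
        exact e'.symm_apply_apply (q - p)
      rw [h1]
      abel
    rw [hid]
    calc ‖e'.symm (f q) - e'.symm (f q - f p - f' p (q - p))‖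
        ≤ ‖e'.symm (f q)‖ + ‖e'.symm (f q - f p - f' p (q - p))‖ := norm_sub_le _ _
      _ ≤ μ * ‖f q‖ + μ * ‖f q - f p - f' p (q - p)‖ := add_le_add (hb' _) (hb' _)
      _ ≤ μ * ‖f q‖ + μ * (K / 2 * ‖q - p‖ ^ 2) := by
          have := mul_le_mul_of_nonneg_left htay hμpos.le
          linarith
  -- scalar invariance bound
  have hinv_scalar : ∀ u : ℝ, 0 ≤ u → u ≤ t → μ * η + μ * (K / 2 * u ^ 2) + d ≤ t := by
    intro u h0 hut
    have hu2 : u ^ 2 ≤ t ^ 2 := by nlinarith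
    have h1 : μ * (K / 2 * u ^ 2) ≤ μ * (K / 2 * t ^ 2) := by
      apply mul_le_mul_of_nonneg_left ?_ hμpos.le
      have := mul_le_mul_of_nonneg_left hu2 (by positivity : (0:ℝ) ≤ K / 2)
      linarith
    have h2 : μ * η + μ * (K / 2 * t ^ 2) = t - d := by
      calc μ * η + μ * (K / 2 * t ^ 2) = μ * (η + K / 2 * t ^ 2) := by ring
        _ = (t - d) * (μ * (ν - K * t)) := by rw [hexp]; ring
        _ = t - d := by rw [hμν]; ring
    linarith
  constructor
  · -- existence and uniqueness
    set Φ : X → X := fun z => z - e₀.symm (f z) with hΦ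
    set c0 : ℝ := ν⁻¹ * (K * t) with hc0
    have hc0nonneg : 0 ≤ c0 := by positivity
    have hΦlip : ∀ z ∈ Metric.closedBall x₀ t, ∀ w ∈ Metric.closedBall x₀ t,
        ‖Φ z - Φ w‖ ≤ c0 * ‖z - w‖ := by
      intro z hz w hw
      apply (convex_closedBall x₀ t).norm_image_sub_le_of_norm_hasFDerivWithin_le
        (f' := fun z => ContinuousLinearMap.id ℝ X - (e₀.symm : Y →L[ℝ] X).comp (f' z))
        ?_ ?_ hw hz
      · intro p hp
        have h1 : HasFDerivAt (fun w : X => e₀.symm (f w))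
            ((e₀.symm : Y →L[ℝ] X).comp (f' p)) p :=
          (e₀.symm.hasFDerivAt).comp p (hder p hp)
        exact ((hasFDerivAt_id p).sub h1).hasFDerivWithinAt
      · intro p hp
        have heq : ContinuousLinearMap.id ℝ X - (e₀.symm : Y →L[ℝ] X).comp (f' p)
            = (e₀.symm : Y →L[ℝ] X).comp ((e₀ : X →L[ℝ] Y) - f' p) := by
          ext w
          simp only [ContinuousLinearMap.coe_comp', Function.comp_apply,
            ContinuousLinearMap.sub_apply, ContinuousLinearMap.coe_id',
            ContinuousLinearMap.id_apply, id_eq, map_sub,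
            ContinuousLinearEquiv.coe_coe, ContinuousLinearEquiv.symm_apply_apply]
        show ‖ContinuousLinearMap.id ℝ X - (e₀.symm : Y →L[ℝ] X).comp (f' p)‖ ≤ c0
        rw [heq]
        exact hAB p hp
    have hmaps : Set.MapsTo Φ (Metric.closedBall x₀ t) (Metric.closedBall x₀ t) := by
      intro z hz
      rw [Metric.mem_closedBall, dist_eq_norm]
      have h1 : ‖Φ z - Φ x₀‖ ≤ c0 * ‖z - x₀‖ := hΦlip z hz x₀ hx₀mem
      have h2 : ‖Φ x₀ - x₀‖ ≤ ν⁻¹ * η := by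
        have h3 : Φ x₀ - x₀ = -(e₀.symm (f x₀)) := by
          have h3' : Φ x₀ = x₀ - e₀.symm (f x₀) := rfl
          rw [h3']; abel
        rw [h3, norm_neg]
        calc ‖e₀.symm (f x₀)‖ ≤ ‖(e₀.symm : Y →L[ℝ] X)‖ * ‖f x₀‖ :=
              (e₀.symm : Y →L[ℝ] X).le_opNorm _
          _ ≤ ν⁻¹ * η := mul_le_mul he₀n hfx₀ (norm_nonneg _) (inv_nonneg.mpr hν.le)
      have h4 : K * t ^ 2 + η ≤ ν * t := by
        nlinarith [hexp, mul_nonneg hd.le hνKtpos.le, mul_nonneg hK.le (sq_nonneg t)]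
      have h5 : c0 * t + ν⁻¹ * η ≤ t := by
        have h6 : ν⁻¹ * (K * t ^ 2 + η) ≤ ν⁻¹ * (ν * t) :=
          mul_le_mul_of_nonneg_left h4 (inv_nonneg.mpr hν.le)
        have h7 : ν⁻¹ * (ν * t) = t := by field_simp
        have h8 : c0 * t + ν⁻¹ * η = ν⁻¹ * (K * t ^ 2 + η) := by rw [hc0]; ring
        rw [h8]
        linarith
      have h8 : Φ z - x₀ = (Φ z - Φ x₀) + (Φ x₀ - x₀) := by abel
      rw [h8]
      calc ‖(Φ z - Φ x₀) + (Φ x₀ - x₀)‖ ≤ ‖Φ z - Φ x₀‖ + ‖Φ x₀ - x₀‖ := norm_add_le _ _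
        _ ≤ c0 * t + ν⁻¹ * η := by
            have h9 := hnorm_mem z hz
            have h10 : c0 * ‖z - x₀‖ ≤ c0 * t := mul_le_mul_of_nonneg_left h9 hc0nonneg
            linarith
        _ ≤ t := h5
    have hcomplete : IsComplete (Metric.closedBall x₀ t) :=
      Metric.isClosed_closedBall.isComplete
    have hcontr : ContractingWith (Real.toNNReal c0)
        (hmaps.restrict Φ (Metric.closedBall x₀ t) (Metric.closedBall x₀ t)) := by
      constructor
      · have h1 : (Real.toNNReal c0 : ℝ) < 1 := by
          rw [Real.coe_toNNReal c0 hc0nonneg]; exact hc1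
        exact_mod_cast h1
      · apply LipschitzWith.of_dist_le_mul
        intro p q
        have h1 : dist (hmaps.restrict Φ _ _ p) (hmaps.restrict Φ _ _ q)
            = dist (Φ (p : X)) (Φ (q : X)) := rfl
        rw [h1, Subtype.dist_eq, dist_eq_norm, dist_eq_norm,
          Real.coe_toNNReal c0 hc0nonneg]
        exact hΦlip _ p.2 _ q.2
    obtain ⟨y, hy_mem, hy_fix, -, -⟩ := ContractingWith.exists_fixedPoint' hcomplete hmaps
      hcontr hx₀mem (edist_ne_top x₀ (Φ x₀))
    have hfy : f y = 0 := by
      have h1 : y - e₀.symm (f y) = y := hy_fix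
      have h2 : e₀.symm (f y) = 0 := by
        have := sub_eq_self.mp h1
        exact this
      have h3 := congrArg e₀ h2
      simpa using h3
    refine ⟨y, ⟨hy_mem, hfy⟩, ?_⟩
    rintro z ⟨hz_mem, hz0⟩
    have h1 : ‖Φ z - Φ y‖ ≤ c0 * ‖z - y‖ := hΦlip z hz_mem y hy_mem
    have hΦz : Φ z = z := by
      have h4 : Φ z = z - e₀.symm (f z) := rfl
      rw [h4, hz0]; simp
    have hΦy : Φ y = y := by
      have h4 : Φ y = y - e₀.symm (f y) := rfl
      rw [h4, hfy]; simp
    rw [hΦz, hΦy] at h1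
    have h2 : ‖z - y‖ = 0 := by
      have hn := norm_nonneg (z - y)
      rcases le_or_gt ‖z - y‖ 0 with h2 | h2
      · linarith
      · exfalso
        have h3 : c0 * ‖z - y‖ < 1 * ‖z - y‖ := mul_lt_mul_of_pos_right hc1 h2
        rw [one_mul] at h3
        linarith
    have h3 : z - y = 0 := norm_eq_zero.mp h2
    have : z = y := by
      have := sub_eq_zero.mp h3
      exact this
    exact this
  · -- iteration
    intro x rs hx0 hrs hrec
    have hinv : ∀ k, x k ∈ Metric.closedBall x₀ t := by
      intro k
      induction k with
      | zero => rw [hx0]; exact hx₀mem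
      | succ k ih =>
        obtain ⟨e, he, hb⟩ := key_inv (x k) ih
        have hx1 : x (k + 1) = x k - e.symm (f (x k)) + rs k := hrec k e he
        have hst := hstep (x k) ih e he x₀ hx₀mem
        rw [Metric.mem_closedBall, dist_eq_norm]
        have h1 : x (k + 1) - x₀ = -(x₀ - (x k - e.symm (f (x k)))) + rs k := by
          rw [hx1]; abel
        rw [h1]
        calc ‖-(x₀ - (x k - e.symm (f (x k)))) + rs k‖
            ≤ ‖x₀ - (x k - e.symm (f (x k)))‖ + ‖rs k‖ := by
              rw [← norm_neg (x₀ - (x k - e.symm (f (x k))))] at hst ⊢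
              exact norm_add_le _ _
          _ ≤ (μ * ‖f x₀‖ + μ * (K / 2 * ‖x₀ - x k‖ ^ 2)) + d := add_le_add hst (hrs k)
          _ ≤ μ * η + μ * (K / 2 * ‖x₀ - x k‖ ^ 2) + d := by
              have := mul_le_mul_of_nonneg_left hfx₀ hμpos.le
              linarith
          _ ≤ t := by
              apply hinv_scalar ‖x₀ - x k‖ (norm_nonneg _)
              rw [norm_sub_rev]
              exact hnorm_mem _ ih
    refine ⟨hinv, ?_⟩
    intro xstar hxs hfxs k
    obtain ⟨e, he, hb⟩ := key_inv (x k) (hinv k)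
    have hx1 : x (k + 1) = x k - e.symm (f (x k)) + rs k := hrec k e he
    have hst := hstep (x k) (hinv k) e he xstar hxs
    rw [hfxs, norm_zero, mul_zero, zero_add] at hst
    have h1 : xstar - x (k + 1) = (xstar - (x k - e.symm (f (x k)))) - rs k := by
      rw [hx1]; abel
    rw [h1]
    calc ‖(xstar - (x k - e.symm (f (x k)))) - rs k‖
        ≤ ‖xstar - (x k - e.symm (f (x k)))‖ + ‖rs k‖ := norm_sub_le _ _
      _ ≤ μ * (K / 2 * ‖xstar - x k‖ ^ 2) + ‖rs k‖ := add_le_add hst le_rfl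
      _ ≤ Real.sqrt 3 / 2 * K * ν⁻¹ * ‖xstar - x k‖ ^ 2 + ‖rs k‖ := by
          have h2 : μ * (K / 2 * ‖xstar - x k‖ ^ 2)
              ≤ (Real.sqrt 3 * ν⁻¹) * (K / 2 * ‖xstar - x k‖ ^ 2) :=
            mul_le_mul_of_nonneg_right hμ3 (by positivity)
          have h3 : (Real.sqrt 3 * ν⁻¹) * (K / 2 * ‖xstar - x k‖ ^ 2)
              = Real.sqrt 3 / 2 * K * ν⁻¹ * ‖xstar - x k‖ ^ 2 := by ring
          linarith
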